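/- Equivalence of objective robustification: for η ∈ ℝ^J with c̃_j η_j ≥ 0, budgets Γ_i ≥ 0 and server map s : J → I, the worst-case objective min over ξ ∈ U of ∑_j (c̄_j − ξ_j c̃_j) η_j equals ∑_j c̄_j η_j − min over (β, γ) ≥ 0 with β_i + γ_{i,j} ≥ c̃_j η_j (for all i and j with s(j) = i) of ∑_i (Γ_i β_i + ∑_{j : s(j)=i} γ_{i,j}), where U = {ξ : 0 ≤ ξ ≤ 1, ∑_{j:s(j)=i} ξ_j ≤ Γ_i ∀i}. -/
import Mathlib

open Finset

/-- Single-server fractional-knapsack strong duality: an explicit complementary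
primal/dual pair with equal objective values. -/
lemma one_server {J : Type*} [DecidableEq J] (a : J → ℝ) :
    ∀ (S : Finset J), (∀ j ∈ S, 0 ≤ a j) → ∀ Γ : ℝ, 0 ≤ Γ →
    ∃ (ξ : J → ℝ) (β : ℝ) (γ : J → ℝ),
      (∀ j, 0 ≤ ξ j ∧ ξ j ≤ 1) ∧ (∑ j ∈ S, ξ j ≤ Γ) ∧ 0 ≤ β ∧ (∀ j, 0 ≤ γ j) ∧
      (∀ j ∈ S, a j ≤ β + γ j) ∧ (β = 0 ∨ ∃ j ∈ S, β ≤ a j) ∧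
      Γ * β + ∑ j ∈ S, γ j = ∑ j ∈ S, ξ j * a j := by
  intro S
  induction S using Finset.strongInduction with
  | _ S ih =>
    intro ha Γ hΓ
    rcases S.eq_empty_or_nonempty with rfl | hS
    · exact ⟨0, 0, 0, by simp, by simpa, le_refl 0, fun j => le_refl 0, by simp,
        Or.inl rfl, by simp⟩
    obtain ⟨m, hm, hmax⟩ := S.exists_max_image a hS
    by_cases h1 : 1 ≤ Γ
    · obtain ⟨ξ', β', γ', hξ'01, hξ'sum, hβ', hγ', hfeas', hβle', hval'⟩ :=
        ih (S.erase m) (Finset.erase_ssubset hm)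
          (fun j hj => ha j (Finset.mem_of_mem_erase hj)) (Γ - 1) (by linarith)
      have hβ'm : β' ≤ a m := by
        rcases hβle' with h | ⟨j, hj, hle⟩
        · exact h ▸ ha m hm
        · exact hle.trans (hmax j (Finset.mem_of_mem_erase hj))
      have hsum_erase_eq : ∀ f : J → ℝ, ∑ x ∈ S \ {m}, f x = ∑ x ∈ S.erase m, f x := by
        intro f; rw [Finset.sdiff_singleton_eq_erase]
      refine ⟨Function.update ξ' m 1, β', Function.update γ' m (a m - β'), ?_, ?_, hβ',
        ?_, ?_, ?_, ?_⟩
      · intro j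
        rcases eq_or_ne j m with rfl | hne
        · simp
        · simp [Function.update_of_ne hne]; exact hξ'01 j
      · rw [Finset.sum_update_of_mem hm, hsum_erase_eq]; linarith
      · intro j
        rcases eq_or_ne j m with rfl | hne
        · simpa using sub_nonneg.mpr hβ'm
        · simpa [Function.update_of_ne hne] using hγ' j
      · intro j hj
        rcases eq_or_ne j m with rfl | hne
        · simp
        · simpa [Function.update_of_ne hne] using hfeas' j (Finset.mem_erase.mpr ⟨hne, hj⟩)
      · rcases hβle' with h | ⟨j, hj, hle⟩
        · exact Or.inl h
        · exact Or.inr ⟨j, Finset.mem_of_mem_erase hj, hle⟩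
      · rw [Finset.sum_update_of_mem hm, hsum_erase_eq,
          show (∑ x ∈ S, Function.update ξ' m 1 x * a x)
            = ∑ x ∈ S, Function.update (fun x => ξ' x * a x) m (a m) x from
              Finset.sum_congr rfl (fun x _ => by
                rcases eq_or_ne x m with rfl | hne
                · simp
                · simp [Function.update_of_ne hne]),
          Finset.sum_update_of_mem hm, hsum_erase_eq]
        linarith
    · push_neg at h1
      refine ⟨fun j => if j = m then Γ else 0, a m, 0, ?_, ?_, ha m hm, fun j => le_refl 0,
        ?_, Or.inr ⟨m, hm, le_refl _⟩, ?_⟩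
      · intro j
        rcases eq_or_ne j m with rfl | hne
        · simp; constructor <;> [exact hΓ; linarith]
        · simp [hne]
      · rw [Finset.sum_ite_eq' S m (fun _ => Γ)]; simp [hm]
      · intro j hj; simpa using hmax j hj
      · rw [show (∑ x ∈ S, (if x = m then Γ else 0) * a x)
            = ∑ x ∈ S, (if x = m then Γ * a m else 0) from
              Finset.sum_congr rfl (fun x _ => by by_cases h : x = m <;> simp [h]),
          Finset.sum_ite_eq' S m (fun _ => Γ * a m)]
        simp [hm]

theorem stmt14 {J I : Type*} [Fintype J] [Fintype I] [DecidableEq I]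
    (s : J → I) (cbar ctil η : J → ℝ) (hcη : ∀ j, 0 ≤ ctil j * η j)
    (Γ : I → ℝ) (hΓ : ∀ i, 0 ≤ Γ i) :
    sInf {v : ℝ | ∃ ξ : J → ℝ, (∀ j, 0 ≤ ξ j ∧ ξ j ≤ 1) ∧
        (∀ i, (∑ j ∈ Finset.univ.filter (fun j => s j = i), ξ j) ≤ Γ i) ∧
        v = ∑ j, (cbar j - ξ j * ctil j) * η j} =
      (∑ j, cbar j * η j) -
        sInf {v : ℝ | ∃ (β : I → ℝ) (γ : I → J → ℝ),
          (∀ i, 0 ≤ β i) ∧ (∀ i j, 0 ≤ γ i j) ∧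
          (∀ j, β (s j) + γ (s j) j ≥ ctil j * η j) ∧
          v = ∑ i, (Γ i * β i +
            ∑ j ∈ Finset.univ.filter (fun j => s j = i), γ i j)} := by
  classical
  set a : J → ℝ := fun j => ctil j * η j with ha_def
  set C : ℝ := ∑ j, cbar j * η j with hC_def
  set P : Set ℝ := {v : ℝ | ∃ ξ : J → ℝ, (∀ j, 0 ≤ ξ j ∧ ξ j ≤ 1) ∧
        (∀ i, (∑ j ∈ Finset.univ.filter (fun j => s j = i), ξ j) ≤ Γ i) ∧
        v = ∑ j, (cbar j - ξ j * ctil j) * η j} with hP_def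
  set D : Set ℝ := {v : ℝ | ∃ (β : I → ℝ) (γ : I → J → ℝ),
          (∀ i, 0 ≤ β i) ∧ (∀ i j, 0 ≤ γ i j) ∧
          (∀ j, β (s j) + γ (s j) j ≥ ctil j * η j) ∧
          v = ∑ i, (Γ i * β i +
            ∑ j ∈ Finset.univ.filter (fun j => s j = i), γ i j)} with hD_def
  -- rewrite primal objective
  have hobj : ∀ ξ : J → ℝ, ∑ j, (cbar j - ξ j * ctil j) * η j = C - ∑ j, ξ j * a j := by
    intro ξ
    rw [hC_def, ← Finset.sum_sub_distrib]
    exact Finset.sum_congr rfl fun j _ => by ring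
  -- complementary pair per server
  have key := fun i : I => one_server a (Finset.univ.filter (fun j => s j = i))
    (fun j _ => hcη j) (Γ i) (hΓ i)
  choose ξf βf γf hξf01 hξfsum hβf hγf hfeasf _ hvalf using key
  set ξs : J → ℝ := fun j => ξf (s j) j with hξs_def
  have hξsP : (C - ∑ j, ξs j * a j) ∈ P := by
    refine ⟨ξs, fun j => hξf01 (s j) j, ?_, (hobj ξs).symm⟩
    intro i
    refine le_trans (le_of_eq (Finset.sum_congr rfl fun j hj => ?_)) (hξfsum i)
    simp only [Finset.mem_filter] at hj
    simp only [ξs]; rw [hj.2]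
  have hdvalD : (∑ j, ξs j * a j) ∈ D := by
    refine ⟨βf, γf, hβf, hγf, fun j => hfeasf (s j) j (by simp), ?_⟩
    rw [← Finset.sum_fiberwise Finset.univ s (fun j => ξs j * a j)]
    refine (Finset.sum_congr rfl fun i _ => ?_).symm
    rw [hvalf i]
    refine Finset.sum_congr rfl fun j hj => ?_
    simp only [Finset.mem_filter] at hj
    simp only [ξs]; rw [hj.2]
  have hPne : P.Nonempty := ⟨_, hξsP⟩
  have hDne : D.Nonempty := ⟨_, hdvalD⟩
  have hDbdd : BddBelow D := by
    refine ⟨0, fun v hv => ?_⟩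
    obtain ⟨β, γ, hβ, hγ, _, rfl⟩ := hv
    refine Finset.sum_nonneg fun i _ => add_nonneg (mul_nonneg (hΓ i) (hβ i))
      (Finset.sum_nonneg fun j _ => hγ i j)
  -- weak duality: every primal value ≥ C - every dual value
  have hweak : ∀ v ∈ P, ∀ d ∈ D, C - d ≤ v := by
    rintro v ⟨ξ, hξ01, hξsum, rfl⟩ d ⟨β, γ, hβ, hγ, hfeas, rfl⟩
    rw [hobj ξ]
    have h1 : ∑ j, ξ j * a j ≤ ∑ i, (Γ i * β i + ∑ j ∈ Finset.univ.filter (fun j => s j = i), γ i j) := by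
      rw [← Finset.sum_fiberwise Finset.univ s (fun j => ξ j * a j)]
      refine Finset.sum_le_sum fun i _ => ?_
      have h2 : ∀ j ∈ Finset.univ.filter (fun j => s j = i),
          ξ j * a j ≤ ξ j * β i + γ i j := by
        intro j hj
        simp only [Finset.mem_filter] at hj
        have hfj := hfeas j
        rw [hj.2] at hfj
        calc ξ j * a j ≤ ξ j * (β i + γ i j) :=
              mul_le_mul_of_nonneg_left hfj (hξ01 j).1
          _ = ξ j * β i + ξ j * γ i j := by ring
          _ ≤ ξ j * β i + γ i j := by
              nlinarith [(hξ01 j).2, hγ i j, (hξ01 j).1]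
      calc ∑ j ∈ Finset.univ.filter (fun j => s j = i), ξ j * a j
          ≤ ∑ j ∈ Finset.univ.filter (fun j => s j = i), (ξ j * β i + γ i j) :=
            Finset.sum_le_sum h2
        _ = (∑ j ∈ Finset.univ.filter (fun j => s j = i), ξ j) * β i
            + ∑ j ∈ Finset.univ.filter (fun j => s j = i), γ i j := by
            rw [Finset.sum_add_distrib, Finset.sum_mul]
        _ ≤ Γ i * β i + ∑ j ∈ Finset.univ.filter (fun j => s j = i), γ i j := by
            have := mul_le_mul_of_nonneg_right (hξsum i) (hβ i)
            linarith
    linarith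
  have hPbdd : BddBelow P := by
    obtain ⟨d, hd⟩ := hDne
    exact ⟨C - d, fun v hv => hweak v hv d hd⟩
  apply le_antisymm
  · -- sInf P ≤ C - sInf D
    have h1 : sInf D ≤ ∑ j, ξs j * a j := csInf_le hDbdd hdvalD
    have h2 : sInf P ≤ C - ∑ j, ξs j * a j := csInf_le hPbdd hξsP
    linarith
  · -- C - sInf D ≤ sInf P
    refine le_csInf hPne fun v hv => ?_
    have : sInf D ≥ C - v := by
      refine le_csInf hDne fun d hd => ?_
      have := hweak v hv d hd
      linarith
    linarith
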